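/- Let R be a commutative ring, n ≥ 2, for which the stable range condition sr_{2n−2}(R) holds. Let v, w ∈ Um_n(R). Then there exist ε, δ ∈ E_n(R) such that the first coordinates of vε and wδ sum to 1, i.e. (vε)₁ + (wδ)₁ = 1. -/

import Mathlib

/-- A row `v` of length `n` over a commutative ring is *unimodular* if there is a row `w`
with `∑ i, v i * w i = 1`. -/
def IsUnimodular {R : Type*} [CommRing R] {n : ℕ} (v : Fin n → R) : Prop :=
  ∃ w : Fin n → R, ∑ i, v i * w i = 1

/-- `ε` lies in the elementary group `E_n(R)`, i.e. the (sub)group of `GL_n(R)` generated by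
the elementary matrices `e_{ij}(λ) = I + λ E_{ij}` (`i ≠ j`).  Since the generating set is
closed under inverses, this coincides with the multiplicative closure. -/
def IsElementary {R : Type*} [CommRing R] {n : ℕ} (ε : Matrix (Fin n) (Fin n) R) : Prop :=
  ε ∈ Submonoid.closure {M : Matrix (Fin n) (Fin n) R |
    ∃ (i j : Fin n) (c : R), i ≠ j ∧ M = Matrix.transvection i j c}

/-- An `m × n` matrix is right invertible (i.e. lies in `Um_{m,n}(R)`) if it has a right
inverse. -/
def RightInvertible {R : Type*} [CommRing R] {m n : ℕ} (A : Matrix (Fin m) (Fin n) R) : Prop :=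
  ∃ B : Matrix (Fin n) (Fin m) R, A * B = 1

/-- The stable range condition `sr_k(R)`. -/
def SRCond (R : Type*) [CommRing R] (k : ℕ) : Prop :=
  ∀ a : Fin (k + 1) → R, IsUnimodular a →
    ∃ c : Fin k → R, IsUnimodular (fun i : Fin k => a i.castSucc + c i * a (Fin.last k))

section helpers

open Matrix

variable {R : Type*} [CommRing R] {k : ℕ}

lemma vecMul_stdB (x : Fin (k + 1) → R) (i j : Fin (k + 1)) (c : R) :
    Matrix.vecMul x (Matrix.single i j c) = fun l => if j = l then x i * c else 0 := by
  funext l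
  simp [Matrix.vecMul, dotProduct, Matrix.single, ite_and, Finset.sum_ite_eq, mul_ite]

lemma vecMul_sum' (x : Fin (k + 1) → R) (M : Fin k → Matrix (Fin (k + 1)) (Fin (k + 1)) R) :
    Matrix.vecMul x (∑ i, M i) = ∑ i, Matrix.vecMul x (M i) := by
  funext l
  simp only [Matrix.vecMul, dotProduct, Matrix.sum_apply, Finset.sum_apply, Finset.mul_sum]
  exact Finset.sum_comm

lemma vecMul_rowAdd (x : Fin (k + 1) → R) (f : Fin k → R) :
    Matrix.vecMul x (1 + ∑ i, Matrix.single (0 : Fin (k + 1)) i.succ (f i)) =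
    Fin.cons (x 0) (fun i => x i.succ + x 0 * f i) := by
  rw [Matrix.vecMul_add, Matrix.vecMul_one, vecMul_sum']
  funext l
  simp only [Pi.add_apply, Finset.sum_apply, vecMul_stdB]
  refine Fin.cases ?_ ?_ l
  · simp [Fin.succ_ne_zero]
  · intro m
    simp [Fin.succ_inj, Finset.sum_ite_eq']

lemma vecMul_colAdd (x : Fin (k + 1) → R) (d : Fin k → R) :
    Matrix.vecMul x (1 + ∑ i, Matrix.single (i.succ) (0 : Fin (k + 1)) (d i)) 0 =
    x 0 + ∑ i, x i.succ * d i := by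
  rw [Matrix.vecMul_add, Matrix.vecMul_one, vecMul_sum']
  simp [Finset.sum_apply, vecMul_stdB]

lemma isElementary_one_add_sum (r c : Fin k → Fin (k + 1)) (hrc : ∀ i, r i ≠ c i)
    (hcross : ∀ i j, c i ≠ r j) (f : Fin k → R) :
    IsElementary (1 + ∑ i, Matrix.single (r i) (c i) (f i)) := by
  classical
  have main : ∀ S : Finset (Fin k),
      IsElementary (1 + ∑ i ∈ S, Matrix.single (r i) (c i) (f i)) := by
    intro S
    refine Finset.induction_on S ?_ ?_
    · simpa [IsElementary] using Submonoid.one_mem _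
    · intro a S haS ih
      have key : (1 + ∑ i ∈ S, Matrix.single (r i) (c i) (f i)) *
          Matrix.transvection (r a) (c a) (f a)
          = 1 + ∑ i ∈ insert a S, Matrix.single (r i) (c i) (f i) := by
        rw [Matrix.transvection, Finset.sum_insert haS, mul_add, mul_one, add_mul, one_mul,
          Finset.sum_mul, Finset.sum_eq_zero
            (fun i _ => Matrix.single_mul_single_of_ne (c := f i) (r i) (c i) (r a) (hcross i a) (f a))]
        abel
      rw [← key]
      exact Submonoid.mul_mem _ ih
        (Submonoid.subset_closure ⟨r a, c a, f a, hrc a, rfl⟩)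
  simpa using main Finset.univ

lemma isElementary_rowAdd (f : Fin k → R) :
    IsElementary (1 + ∑ i, Matrix.single (0 : Fin (k + 1)) i.succ (f i)) :=
  isElementary_one_add_sum _ _ (fun i => (Fin.succ_ne_zero i).symm)
    (fun i _ => Fin.succ_ne_zero i) f

lemma isElementary_colAdd (f : Fin k → R) :
    IsElementary (1 + ∑ i, Matrix.single (i.succ) (0 : Fin (k + 1)) (f i)) :=
  isElementary_one_add_sum _ _ (fun i => Fin.succ_ne_zero i)
    (fun i j => (Fin.succ_ne_zero j).symm) f

end helpers

/-- Let `R` be a commutative ring, `n = k + 1 ≥ 2`, satisfying the stable range condition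
`sr_{2n−2}(R)`.  For `v, w ∈ Um_n(R)` there are `ε, δ ∈ E_n(R)` such that the first
coordinates of `vε` and `wδ` sum to `1`. -/
theorem first_coords_sum_one {R : Type*} [CommRing R]
    (k : ℕ) (hk : 1 ≤ k) (hsr : SRCond R (2 * (k + 1) - 2))
    (v w : Fin (k + 1) → R) (hv : IsUnimodular v) (hw : IsUnimodular w) :
    ∃ ε δ : Matrix (Fin (k + 1)) (Fin (k + 1)) R,
      IsElementary ε ∧ IsElementary δ ∧
      Matrix.vecMul v ε 0 + Matrix.vecMul w δ 0 = 1 := by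
  classical
  obtain ⟨p, hp⟩ := hv
  obtain ⟨q, hq⟩ := hw
  have hsr' : SRCond R (k + k) := by
    have h2 : 2 * (k + 1) - 2 = k + k := by omega
    rwa [h2] at hsr
  set P : R := ∑ i : Fin k, v i.succ * p i.succ with hP
  set Q : R := ∑ i : Fin k, w i.succ * q i.succ with hQ
  have hv0 : v 0 * p 0 = 1 - P := by
    rw [Fin.sum_univ_succ] at hp; linear_combination hp
  have hw0 : w 0 * q 0 = 1 - Q := by
    rw [Fin.sum_univ_succ] at hq; linear_combination hq
  -- the long unimodular row
  have haU : IsUnimodular (Fin.snoc (Fin.append (fun i : Fin k => v i.succ)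
      (fun j : Fin k => w j.succ)) (v 0 * w 0) : Fin (k + k + 1) → R) := by
    refine ⟨Fin.snoc (Fin.append (fun i : Fin k => p i.succ * (1 - Q))
      (fun j : Fin k => q j.succ)) (p 0 * q 0), ?_⟩
    rw [Fin.sum_univ_castSucc]
    simp only [Fin.snoc_castSucc, Fin.snoc_last]
    rw [Fin.sum_univ_add]
    simp only [Fin.append_left, Fin.append_right]
    have e1 : ∑ i : Fin k, v i.succ * (p i.succ * (1 - Q)) = P * (1 - Q) := by
      rw [hP, Finset.sum_mul]
      exact Finset.sum_congr rfl fun i _ => by ring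
    rw [e1, ← hQ]
    linear_combination (w 0 * q 0) * hv0 + (1 - P) * hw0
  obtain ⟨c, z, hz⟩ := hsr' _ haU
  simp only [Fin.snoc_castSucc, Fin.snoc_last] at hz
  rw [Fin.sum_univ_add] at hz
  simp only [Fin.append_left, Fin.append_right] at hz
  -- the four rounds of transvections
  refine ⟨(1 + ∑ i, Matrix.single (0 : Fin (k + 1)) i.succ (c (Fin.castAdd k i) * w 0)) *
      (1 + ∑ i, Matrix.single (i.succ) (0 : Fin (k + 1))
        ((1 - v 0 - w 0) * z (Fin.castAdd k i))),
    (1 + ∑ j, Matrix.single (0 : Fin (k + 1)) j.succ (c (Fin.natAdd k j) * v 0)) *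
      (1 + ∑ j, Matrix.single (j.succ) (0 : Fin (k + 1))
        ((1 - v 0 - w 0) * z (Fin.natAdd k j))),
    Submonoid.mul_mem _ (isElementary_rowAdd _) (isElementary_colAdd _),
    Submonoid.mul_mem _ (isElementary_rowAdd _) (isElementary_colAdd _), ?_⟩
  rw [← Matrix.vecMul_vecMul, ← Matrix.vecMul_vecMul, vecMul_rowAdd, vecMul_rowAdd,
    vecMul_colAdd, vecMul_colAdd]
  simp only [Fin.cons_zero, Fin.cons_succ]
  have h1 : ∑ i : Fin k, (v i.succ + v 0 * (c (Fin.castAdd k i) * w 0)) *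
      ((1 - v 0 - w 0) * z (Fin.castAdd k i)) =
      (1 - v 0 - w 0) * ∑ i : Fin k,
        (v i.succ + c (Fin.castAdd k i) * (v 0 * w 0)) * z (Fin.castAdd k i) := by
    rw [Finset.mul_sum]
    exact Finset.sum_congr rfl fun i _ => by ring
  have h2 : ∑ j : Fin k, (w j.succ + w 0 * (c (Fin.natAdd k j) * v 0)) *
      ((1 - v 0 - w 0) * z (Fin.natAdd k j)) =
      (1 - v 0 - w 0) * ∑ j : Fin k,
        (w j.succ + c (Fin.natAdd k j) * (v 0 * w 0)) * z (Fin.natAdd k j) := by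
    rw [Finset.mul_sum]
    exact Finset.sum_congr rfl fun j _ => by ring
  rw [h1, h2]
  linear_combination (1 - v 0 - w 0) * hz
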